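/- Lemma (maximum of empirical-norm deviations over the net): Let δ = T/8, d > 16, and let {G¹_δ, …, G^{N(δ)}_δ} be the net of the entropy lemma (with N(δ) ≤ (18T/δ)^{2(d+1)k}, ‖G^j_δ − M0‖_∞ ≤ 2a, ‖G^j_δ − M0‖₂ ≤ 2T). Then with probability at least 1 − 4·exp(−p·δ²/(8·a²)), max_{j=1,…,N(δ)} |‖𝒳(M0 − G^j_δ)‖₂ − ‖M0 − G^j_δ‖_{L2(Π)}| ≤ √p·δ + 8·C*·a·√(kd), where C* ≥ 2 is a universal numerical constant. -/

import Mathlib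

open MeasureTheory ProbabilityTheory

/-- Squared Frobenius norm of a real matrix. -/
noncomputable def frob2 {m1 m2 : ℕ} (A : Matrix (Fin m1) (Fin m2) ℝ) : ℝ :=
  ∑ i, ∑ j, (A i j) ^ 2

/-- Frobenius norm of a real matrix. -/
noncomputable def frob {m1 m2 : ℕ} (A : Matrix (Fin m1) (Fin m2) ℝ) : ℝ :=
  Real.sqrt (frob2 A)

/-- Nuclear (trace) norm of a real matrix: sum of its singular values. -/
noncomputable def nucNorm {m1 m2 : ℕ} (A : Matrix (Fin m1) (Fin m2) ℝ) : ℝ :=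
  ∑ i, Real.sqrt ((show (A.transpose * A).IsHermitian by
    simpa using Matrix.isHermitian_conjTranspose_mul_self A).eigenvalues i)

/-- Operator (spectral) norm of a real matrix. -/
noncomputable def opNorm {m1 m2 : ℕ} (A : Matrix (Fin m1) (Fin m2) ℝ) : ℝ :=
  ⨆ v : {v : Fin m2 → ℝ // ∑ j, (v j) ^ 2 ≤ 1}, Real.sqrt (∑ i, (A.mulVec v.1 i) ^ 2)

/-- Matrix scalar product ⟨A,B⟩ = tr(AᵀB). -/
noncomputable def mdot {m1 m2 : ℕ} (A B : Matrix (Fin m1) (Fin m2) ℝ) : ℝ :=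
  ∑ i, ∑ j, A i j * B i j

/-- Entrywise multiplication by a realized sampling pattern `B0`; this models the
observation operator 𝒳 for one realization of the Bernoulli masks. -/
noncomputable def hadB {m1 m2 : ℕ} (B0 A : Matrix (Fin m1) (Fin m2) ℝ) :
    Matrix (Fin m1) (Fin m2) ℝ :=
  Matrix.of fun i j => B0 i j * A i j

/-- The entries of `B` are i.i.d. Bernoulli(p) random variables (taking values 0/1). -/
def IsBernoulliMatrix {m1 m2 : ℕ} {Ω : Type} [MeasurableSpace Ω] (P : Measure Ω)
    (B : Ω → Matrix (Fin m1) (Fin m2) ℝ) (p : ℝ) : Prop :=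
  (∀ i j, Measurable fun ω => B ω i j) ∧
  (∀ ω i j, B ω i j = 0 ∨ B ω i j = 1) ∧
  (∀ i j, P {ω | B ω i j = 1} = ENNReal.ofReal p) ∧
  iIndepFun (fun q : Fin m1 × Fin m2 => fun ω => B ω q.1 q.2) P

/-- The noise entries are measurable, centered, with variance σ², and bounded by U a.s. -/
def IsBoundedNoise {m1 m2 : ℕ} {Ω : Type} [MeasurableSpace Ω] (P : Measure Ω)
    (E : Ω → Matrix (Fin m1) (Fin m2) ℝ) (σ U : ℝ) : Prop :=
  (∀ i j, Measurable fun ω => E ω i j) ∧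
  (∀ i j, ∫ ω, E ω i j ∂P = 0) ∧
  (∀ i j, ∫ ω, (E ω i j) ^ 2 ∂P = σ ^ 2) ∧
  (∀ i j, ∀ᵐ ω ∂P, |E ω i j| ≤ U)

/-- The entries of `e` are Rademacher (±1, fair) random variables. -/
def IsRademacherMatrix {m1 m2 : ℕ} {Ω : Type} [MeasurableSpace Ω] (P : Measure Ω)
    (e : Ω → Matrix (Fin m1) (Fin m2) ℝ) : Prop :=
  (∀ i j, Measurable fun ω => e ω i j) ∧
  (∀ ω i j, e ω i j = 1 ∨ e ω i j = -1) ∧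
  (∀ i j, P {ω | e ω i j = 1} = 1 / 2)

/-- The entries of `B` and `E` together form an independent family. -/
def JointlyIndep {m1 m2 : ℕ} {Ω : Type} [MeasurableSpace Ω] (P : Measure Ω)
    (B E : Ω → Matrix (Fin m1) (Fin m2) ℝ) : Prop :=
  iIndepFun
    (Sum.elim (fun q : Fin m1 × Fin m2 => fun ω => B ω q.1 q.2)
              (fun q : Fin m1 × Fin m2 => fun ω => E ω q.1 q.2)) P

/-- The class 𝒞(k,a): rank ≤ k, sup-norm ≤ a, and ‖M0−A‖₂² ≥ 256(a∨U)²zd/p. -/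
def classC {m1 m2 : ℕ} (M0 : Matrix (Fin m1) (Fin m2) ℝ) (a U z p : ℝ) (k : ℕ) :
    Set (Matrix (Fin m1) (Fin m2) ℝ) :=
  {A | (∀ i j, |A i j| ≤ a) ∧ 256 * (max a U) ^ 2 * z * (m1 + m2) / p ≤ frob2 (M0 - A) ∧
    A.rank ≤ k}

/-- 𝒞 = ∪_{k=1}^m 𝒞(k,a). -/
def classCfull {m1 m2 : ℕ} (M0 : Matrix (Fin m1) (Fin m2) ℝ) (a U z p : ℝ) :
    Set (Matrix (Fin m1) (Fin m2) ℝ) :=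
  ⋃ k ∈ Finset.Icc 1 (min m1 m2), classC M0 a U z p k

/-- 𝒞(k,a,T) = {A ∈ 𝒞(k,a) : ‖M0−A‖₂ ≤ T}. -/
def classCT {m1 m2 : ℕ} (M0 : Matrix (Fin m1) (Fin m2) ℝ) (a U z p : ℝ) (k : ℕ) (T : ℝ) :
    Set (Matrix (Fin m1) (Fin m2) ℝ) :=
  {A | A ∈ classC M0 a U z p k ∧ frob (M0 - A) ≤ T}

/-- 𝒟_δ(k,a,T) = {A : ‖A‖_∞ ≤ a, ‖A‖₂ ≤ δ, ‖A‖_* ≤ √k·T}. -/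
def classD {m1 m2 : ℕ} (k : ℕ) (a δ T : ℝ) : Set (Matrix (Fin m1) (Fin m2) ℝ) :=
  {A | (∀ i j, |A i j| ≤ a) ∧ frob A ≤ δ ∧ nucNorm A ≤ Real.sqrt k * T}

lemma aux_exp_neg_le (y : ℝ) (hy : 0 ≤ y) : Real.exp (-y) ≤ 1 - y + y^2/2 := by
  have hder : ∀ z : ℝ, HasDerivAt (fun y : ℝ => 1 - y + y^2/2 - Real.exp (-y))
      (-1 + z + Real.exp (-z)) z := by
    intro z
    have h1 : HasDerivAt (fun y : ℝ => Real.exp (-y)) (-Real.exp (-z)) z := by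
      simpa using (hasDerivAt_neg z).exp
    have ha : HasDerivAt (fun y : ℝ => y^2/2) z z := by
      simpa using ((hasDerivAt_pow 2 z).div_const 2)
    have hb : HasDerivAt (fun y : ℝ => 1 - y) (-1) z := by
      simpa using ((hasDerivAt_id' z).const_sub (1:ℝ))
    have := (hb.add ha).sub h1
    exact this.congr_deriv (by ring)
  have hmono : MonotoneOn (fun y : ℝ => 1 - y + y^2/2 - Real.exp (-y)) (Set.Ici 0) := by
    apply monotoneOn_of_deriv_nonneg (convex_Ici 0)
    · exact (Continuous.sub (by continuity) (by continuity)).continuousOn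
    · intro z _
      exact ((hder z).differentiableAt).differentiableWithinAt
    · intro z _
      rw [(hder z).deriv]
      nlinarith [Real.add_one_le_exp (-z)]
  have h0 := hmono Set.self_mem_Ici (Set.mem_Ici.mpr hy) hy
  norm_num at h0
  linarith [h0]

lemma aux_phi_quad (y : ℝ) (h0 : 0 ≤ y) (h1 : y ≤ 1) : Real.exp y - 1 - y ≤ (3/4)*y^2 := by
  have h := Real.exp_bound (x := y) (by rwa [abs_of_nonneg h0]) (n := 2) (by norm_num)
  have hs : (∑ i ∈ Finset.range 2, y ^ i / i.factorial) = 1 + y := by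
    simp [Finset.sum_range_succ]
  rw [hs, abs_of_nonneg h0] at h
  norm_num [Nat.factorial] at h
  have h2 := abs_le.mp h
  nlinarith [h2.2]

lemma aux_phi_chord (x θ : ℝ) (hθ0 : 0 ≤ θ) (hθ1 : θ ≤ 1) :
    Real.exp (θ*x) - 1 - θ*x ≤ θ*(Real.exp x - 1 - x) := by
  have h := convexOn_exp.2 (Set.mem_univ (0:ℝ)) (Set.mem_univ x)
    (show (0:ℝ) ≤ 1-θ by linarith) hθ0 (by ring)
  simp only [smul_eq_mul, mul_zero, zero_add, Real.exp_zero, mul_one] at h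
  nlinarith [h]

lemma aux_mgf_bernoulli {Ω : Type} [MeasurableSpace Ω] (P : Measure Ω) [IsProbabilityMeasure P]
    (b : Ω → ℝ) (hb : Measurable b) (h01 : ∀ ω, b ω = 0 ∨ b ω = 1) (p : ℝ)
    (hp0 : 0 ≤ p) (hP : P {ω | b ω = 1} = ENNReal.ofReal p) (r : ℝ) :
    ∫ ω, Real.exp ((b ω - p) * r) ∂P ≤ Real.exp (p * (Real.exp r - 1 - r)) := by
  have hs : MeasurableSet {ω | b ω = 1} := hb (measurableSet_singleton 1)
  have hind : ∀ ω, b ω = Set.indicator {ω | b ω = 1} (fun _ => (1:ℝ)) ω := by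
    intro ω
    rcases h01 ω with h | h <;> simp [Set.indicator, h]
  have hbint : Integrable b P := by
    rw [funext hind]  -- b = indicator
    exact (integrable_const (1:ℝ)).indicator hs
  have hib : ∫ ω, b ω ∂P = p := by
    rw [funext hind, integral_indicator_const (1:ℝ) hs, measureReal_def, hP, smul_eq_mul, mul_one,
      ENNReal.toReal_ofReal hp0]
  have hpt : ∀ ω, Real.exp ((b ω - p) * r) =
      Real.exp (-(p*r)) * (1 + (Real.exp r - 1) * b ω) := by
    intro ω
    rcases h01 ω with h | h
    · rw [h]; simp [← Real.exp_add]
    · rw [h]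
      have h2 : (1:ℝ) + (Real.exp r - 1) * 1 = Real.exp r := by ring
      rw [h2, ← Real.exp_add]
      ring_nf
  calc ∫ ω, Real.exp ((b ω - p) * r) ∂P
      = ∫ ω, Real.exp (-(p*r)) * (1 + (Real.exp r - 1) * b ω) ∂P := by
        exact integral_congr_ae (Filter.Eventually.of_forall hpt)
    _ = Real.exp (-(p*r)) * (1 + (Real.exp r - 1) * p) := by
        rw [integral_const_mul]
        congr 1
        rw [integral_add (integrable_const 1) (hbint.const_mul _), integral_const,
          integral_const_mul, hib]
        simp
    _ ≤ Real.exp (-(p*r)) * Real.exp (p * (Real.exp r - 1)) := by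
        apply mul_le_mul_of_nonneg_left _ (Real.exp_nonneg _)
        have := Real.add_one_le_exp (p * (Real.exp r - 1))
        nlinarith []
    _ = Real.exp (p * (Real.exp r - 1 - r)) := by
        rw [← Real.exp_add]; ring_nf

lemma aux_chernoff {ι : Type} [Fintype ι] {Ω : Type} [MeasurableSpace Ω] (P : Measure Ω)
    [IsProbabilityMeasure P] (Bv : ι → Ω → ℝ)
    (h_indep : iIndepFun Bv P)
    (h_meas : ∀ q, Measurable (Bv q)) (h01 : ∀ q ω, Bv q ω = 0 ∨ Bv q ω = 1)
    (p : ℝ) (hp0 : 0 ≤ p) (hp1 : p ≤ 1)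
    (hPq : ∀ q, P {ω | Bv q ω = 1} = ENNReal.ofReal p)
    (c : ι → ℝ) (lam t : ℝ) (hlam : 0 ≤ lam) :
    P {ω | t ≤ ∑ q, (Bv q ω - p) * c q} ≤
      ENNReal.ofReal (Real.exp (-(lam*t) + p * ∑ q, (Real.exp (lam * c q) - 1 - lam * c q))) := by
  classical
  set Y : ι → Ω → ℝ := fun q ω => (Bv q ω - p) * c q with hY
  have hYmeas : ∀ q, Measurable (Y q) := fun q => ((h_meas q).sub measurable_const).mul_const _
  have hYindep : iIndepFun Y P := by
    exact h_indep.comp (fun q v => (v - p) * c q)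
      (fun q => (measurable_id.sub measurable_const).mul_const _)
  set X : Ω → ℝ := fun ω => ∑ q, Y q ω with hX
  have hXeq : X = ∑ q, Y q := by
    ext ω; simp [hX, Finset.sum_apply]
  have hXmeas : Measurable X := by
    apply Finset.measurable_sum
    exact fun q _ => hYmeas q
  have hXbound : ∀ ω, |X ω| ≤ ∑ q, |c q| := by
    intro ω
    refine (Finset.abs_sum_le_sum_abs _ _).trans (Finset.sum_le_sum fun q _ => ?_)
    rw [abs_mul]
    have : |Bv q ω - p| ≤ 1 := by
      rcases h01 q ω with h | h <;> rw [h] <;> rw [abs_le] <;> constructor <;> linarith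
    nlinarith [abs_nonneg (c q), abs_nonneg (Bv q ω - p)]
  have hint : Integrable (fun ω => Real.exp (lam * X ω)) P := by
    apply Integrable.mono' (integrable_const (Real.exp (lam * ∑ q, |c q|)))
      ((hXmeas.const_mul lam).exp.aestronglyMeasurable)
    apply Filter.Eventually.of_forall
    intro ω
    rw [Real.norm_eq_abs, abs_of_nonneg (Real.exp_nonneg _), Real.exp_le_exp]
    exact mul_le_mul_of_nonneg_left ((le_abs_self _).trans (hXbound ω)) hlam
  have hcher := measure_ge_le_exp_mul_mgf (μ := P) (X := X) (t := lam) t hlam hint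
  have hmgf : mgf X P lam ≤ Real.exp (p * ∑ q, (Real.exp (lam * c q) - 1 - lam * c q)) := by
    rw [hXeq, hYindep.mgf_sum hYmeas Finset.univ]
    calc ∏ q, mgf (Y q) P lam
        ≤ ∏ q, Real.exp (p * (Real.exp (lam * c q) - 1 - lam * c q)) := by
          apply Finset.prod_le_prod (fun q _ => mgf_nonneg)
          intro q _
          have hdef : mgf (Y q) P lam = ∫ ω, Real.exp (lam * Y q ω) ∂P := rfl
          rw [hdef]
          calc ∫ ω, Real.exp (lam * Y q ω) ∂P
              = ∫ ω, Real.exp ((Bv q ω - p) * (lam * c q)) ∂P := by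
                apply integral_congr_ae
                apply Filter.Eventually.of_forall
                intro ω; simp only [hY]; ring_nf
            _ ≤ Real.exp (p * (Real.exp (lam * c q) - 1 - lam * c q)) :=
                aux_mgf_bernoulli P (Bv q) (h_meas q) (h01 q) p hp0 (hPq q) (lam * c q)
      _ = Real.exp (p * ∑ q, (Real.exp (lam * c q) - 1 - lam * c q)) := by
          rw [← Real.exp_sum, Finset.mul_sum]
  rw [← ENNReal.ofReal_toReal (measure_ne_top P {ω | t ≤ ∑ q, (Bv q ω - p) * c q})]
  apply ENNReal.ofReal_le_ofReal
  have hset : {ω | t ≤ ∑ q, (Bv q ω - p) * c q} = {ω | t ≤ X ω} := by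
    rfl
  rw [hset]
  calc (P {ω | t ≤ X ω}).toReal ≤ Real.exp (-lam * t) * mgf X P lam := hcher
    _ ≤ Real.exp (-lam * t) * Real.exp (p * ∑ q, (Real.exp (lam * c q) - 1 - lam * c q)) :=
        mul_le_mul_of_nonneg_left hmgf (Real.exp_nonneg _)
    _ = Real.exp (-(lam*t) + p * ∑ q, (Real.exp (lam * c q) - 1 - lam * c q)) := by
        rw [← Real.exp_add, neg_mul]

set_option maxHeartbeats 2000000 in
lemma aux_perG {ι : Type} [Fintype ι] {Ω : Type} [MeasurableSpace Ω] (P : Measure Ω)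
    [IsProbabilityMeasure P] (Bv : ι → Ω → ℝ)
    (h_indep : iIndepFun Bv P)
    (h_meas : ∀ q, Measurable (Bv q)) (h01 : ∀ q ω, Bv q ω = 0 ∨ Bv q ω = 1)
    (p : ℝ) (hp0 : 0 < p) (hp1 : p ≤ 1)
    (hPq : ∀ q, P {ω | Bv q ω = 1} = ENNReal.ofReal p)
    (c : ι → ℝ) (a : ℝ) (ha : 0 < a) (hc0 : ∀ q, 0 ≤ c q) (hc4 : ∀ q, c q ≤ 4*a^2)
    (s : ℝ) (hs : 0 < s) :
    ∃ bad : Set Ω, MeasurableSet bad ∧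
      P bad ≤ 2 * ENNReal.ofReal (Real.exp (-(s^2/(8*a^2)))) ∧
      ∀ ω, ω ∉ bad →
        |Real.sqrt (∑ q, Bv q ω * c q) - Real.sqrt (p * ∑ q, c q)| ≤ s := by
  classical
  set F2 : ℝ := ∑ q, c q with hF2
  have hF2nn : 0 ≤ F2 := Finset.sum_nonneg fun q _ => hc0 q
  rcases eq_or_lt_of_le hF2nn with hF20 | hF2pos
  · -- degenerate case: all c q = 0
    refine ⟨∅, MeasurableSet.empty, by simp, ?_⟩
    intro ω _
    have hz : ∀ q ∈ Finset.univ, c q = 0 := by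
      intro q _
      exact (Finset.sum_eq_zero_iff_of_nonneg (fun q _ => hc0 q)).mp hF20.symm q (Finset.mem_univ q)
    have h1 : (∑ q, Bv q ω * c q) = 0 := Finset.sum_eq_zero fun q hq => by rw [hz q hq, mul_zero]
    have h2 : p * F2 = 0 := by rw [← hF20, mul_zero]
    simp only [h1, h2, Real.sqrt_zero, sub_zero, abs_zero, sub_self]
    exact hs.le
  · set qG : ℝ := Real.sqrt (p * F2) with hqG
    have hpF2 : 0 < p * F2 := mul_pos hp0 hF2pos
    have hqGpos : 0 < qG := Real.sqrt_pos.mpr hpF2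
    have hqGsq : qG^2 = p * F2 := Real.sq_sqrt hpF2.le
    have ha2 : (0:ℝ) < 4*a^2 := by positivity
    -- the two bad events
    set Smap : Ω → ℝ := fun ω => ∑ q, (Bv q ω - p) * c q with hSmap
    have hSmeas : Measurable Smap :=
      Finset.measurable_sum _ fun q _ => ((h_meas q).sub measurable_const).mul_const _
    set badU : Set Ω := {ω | s^2 + 2*s*qG ≤ ∑ q, (Bv q ω - p) * c q} with hbadU
    set badL : Set Ω :=
      (if s ≤ qG then {ω | s*qG ≤ ∑ q, (Bv q ω - p) * (-(c q))} else ∅) with hbadL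
    have hmU : MeasurableSet badU := measurableSet_le measurable_const hSmeas
    have hmL : MeasurableSet badL := by
      rw [hbadL]; split_ifs
      · exact measurableSet_le measurable_const
          (Finset.measurable_sum _ fun q _ => ((h_meas q).sub measurable_const).mul_const _)
      · exact MeasurableSet.empty
    have EB := ENNReal.ofReal (Real.exp (-(s^2/(8*a^2))))
    -- upper tail bound
    have hPU : P badU ≤ ENNReal.ofReal (Real.exp (-(s^2/(8*a^2)))) := by
      set xx : ℝ := min 1 (s/qG) with hxx
      have hxx0 : 0 ≤ xx := le_min zero_le_one (div_nonneg hs.le hqGpos.le)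
      have hxx1 : xx ≤ 1 := min_le_left _ _
      set lam : ℝ := xx/(4*a^2) with hlam
      have hlam0 : 0 ≤ lam := by positivity
      refine le_trans (aux_chernoff P Bv h_indep h_meas h01 p hp0.le hp1 hPq c lam
        (s^2 + 2*s*qG) hlam0) (ENNReal.ofReal_le_ofReal (Real.exp_le_exp.mpr ?_))
      -- bound the exponent
      have hsum : ∑ q, (Real.exp (lam * c q) - 1 - lam * c q) ≤ (F2/(4*a^2)) * (Real.exp xx - 1 - xx) := by
        have : ∀ q ∈ Finset.univ, Real.exp (lam * c q) - 1 - lam * c q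
            ≤ (c q/(4*a^2)) * (Real.exp xx - 1 - xx) := by
          intro q _
          have hθ0 : 0 ≤ c q/(4*a^2) := div_nonneg (hc0 q) ha2.le
          have hθ1 : c q/(4*a^2) ≤ 1 := (div_le_one ha2).mpr (hc4 q)
          have harg : lam * c q = (c q/(4*a^2)) * xx := by
            rw [hlam]; field_simp
          rw [harg]
          exact aux_phi_chord xx _ hθ0 hθ1
        refine le_trans (Finset.sum_le_sum this) ?_
        rw [← Finset.sum_mul, ← Finset.sum_div, ← hF2]
      have hquad : Real.exp xx - 1 - xx ≤ (3/4) * xx^2 := aux_phi_quad xx hxx0 hxx1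
      have hphinn : 0 ≤ Real.exp xx - 1 - xx := by nlinarith [Real.add_one_le_exp xx]
      have hkey : xx * (s^2 + 2*s*qG) - (3/4) * xx^2 * qG^2 ≥ s^2 := by
        rcases le_total s qG with hcase | hcase
        · -- xx = s/qG ≤ 1
          have hxval : xx = s/qG := min_eq_right ((div_le_one hqGpos).mpr hcase)
          rw [hxval]
          have h1 : s/qG * (s^2 + 2*s*qG) = s^3/qG + 2*s^2 := by field_simp
          have h2 : (3/4) * (s/qG)^2 * qG^2 = (3/4)*s^2 := by field_simp
          rw [h1, h2]
          have : 0 ≤ s^3/qG := by positivity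
          nlinarith
        · -- qG ≤ s, xx = 1
          have hxval : xx = 1 := min_eq_left ((one_le_div hqGpos).mpr hcase)
          rw [hxval]
          nlinarith [hqGpos]
      have hstep : p * ∑ q, (Real.exp (lam * c q) - 1 - lam * c q)
          ≤ (qG^2/(4*a^2)) * ((3/4) * xx^2) := by
        calc p * ∑ q, (Real.exp (lam * c q) - 1 - lam * c q)
            ≤ p * ((F2/(4*a^2)) * (Real.exp xx - 1 - xx)) := by
              apply mul_le_mul_of_nonneg_left hsum hp0.le
          _ = (p*F2/(4*a^2)) * (Real.exp xx - 1 - xx) := by ring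
          _ ≤ (p*F2/(4*a^2)) * ((3/4) * xx^2) := by
              apply mul_le_mul_of_nonneg_left hquad (by positivity)
          _ = (qG^2/(4*a^2)) * ((3/4) * xx^2) := by rw [hqGsq]
      have hfin : -(lam*(s^2 + 2*s*qG)) + (qG^2/(4*a^2)) * ((3/4) * xx^2) ≤ -(s^2/(4*a^2)) := by
        have expand : -(lam*(s^2 + 2*s*qG)) + (qG^2/(4*a^2)) * ((3/4) * xx^2)
            = -((xx * (s^2 + 2*s*qG) - (3/4) * xx^2 * qG^2)/(4*a^2)) := by rw [hlam]; ring
        rw [expand]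
        apply neg_le_neg
        exact (div_le_div_iff_of_pos_right ha2).mpr hkey
      have hlast : -(s^2/(4*a^2)) ≤ -(s^2/(8*a^2)) := by
        apply neg_le_neg
        rw [div_le_div_iff₀ (by positivity) (by positivity)]
        nlinarith [sq_nonneg s, sq_nonneg a]
      linarith [hstep, hfin, hlast]
    -- lower tail bound
    have hPL : P badL ≤ ENNReal.ofReal (Real.exp (-(s^2/(8*a^2)))) := by
      rw [hbadL]; split_ifs with hcase
      · set lam2 : ℝ := s/(4*a^2*qG) with hlam2
        have hlam20 : 0 ≤ lam2 := div_nonneg hs.le (by positivity)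
        refine le_trans (aux_chernoff P Bv h_indep h_meas h01 p hp0.le hp1 hPq
          (fun q => -(c q)) lam2 (s*qG) hlam20)
          (ENNReal.ofReal_le_ofReal (Real.exp_le_exp.mpr ?_))
        have hterm : ∀ q ∈ Finset.univ,
            Real.exp (lam2 * (-(c q))) - 1 - lam2 * (-(c q)) ≤ (lam2^2/2) * ((4*a^2) * c q) := by
          intro q _
          have hy : 0 ≤ lam2 * c q := mul_nonneg hlam20 (hc0 q)
          have h1 := aux_exp_neg_le (lam2 * c q) hy
          have harg : lam2 * (-(c q)) = -(lam2 * c q) := by ring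
          rw [harg]
          have hcq := hc4 q
          have hcq0 := hc0 q
          nlinarith [mul_nonneg (mul_nonneg (sq_nonneg lam2) hcq0) (sub_nonneg.mpr hcq)]
        have hsum : ∑ q, (Real.exp (lam2 * (-(c q))) - 1 - lam2 * (-(c q)))
            ≤ (lam2^2/2) * ((4*a^2) * F2) := by
          refine le_trans (Finset.sum_le_sum hterm) ?_
          rw [← Finset.mul_sum, ← Finset.mul_sum]
        have e1 : lam2 * (s*qG) = s^2/(4*a^2) := by
          rw [hlam2]; field_simp
        have e2 : p * ((lam2^2/2) * ((4*a^2) * F2)) = s^2/(8*a^2) := by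
          have : p * F2 = qG^2 := hqGsq.symm
          rw [hlam2]
          field_simp
          linear_combination 8 * this
        have hfin : p * ∑ q, (Real.exp (lam2 * (-(c q))) - 1 - lam2 * (-(c q)))
            ≤ s^2/(8*a^2) := by
          rw [← e2]
          exact mul_le_mul_of_nonneg_left hsum hp0.le
        have : -(lam2*(s*qG)) = -(s^2/(4*a^2)) := by rw [e1]
        rw [this]
        have hq : s^2/(4*a^2) = s^2/(8*a^2) + s^2/(8*a^2) := by ring
        linarith [hfin]
      · simp
    refine ⟨badU ∪ badL, hmU.union hmL, ?_, ?_⟩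
    · refine le_trans (measure_union_le _ _) ?_
      rw [two_mul]
      exact add_le_add hPU hPL
    · intro ω hω
      have hnotU : ω ∉ badU := fun h => hω (Set.mem_union_left _ h)
      have hnotL : ω ∉ badL := fun h => hω (Set.mem_union_right _ h)
      have hSU : Smap ω < s^2 + 2*s*qG := by
        by_contra h
        exact hnotU (by rw [hbadU]; exact Set.mem_setOf_eq ▸ (not_lt.mp h))
      have hA : ∑ q, Bv q ω * c q = p*F2 + Smap ω := by
        have hpt : ∀ q ∈ Finset.univ, Bv q ω * c q = (Bv q ω - p) * c q + p * c q :=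
          fun q _ => by ring
        rw [Finset.sum_congr rfl hpt, Finset.sum_add_distrib, ← Finset.mul_sum]
        rw [hSmap, ← hF2]
        ring
      have hAnn : 0 ≤ ∑ q, Bv q ω * c q := by
        apply Finset.sum_nonneg
        intro q _
        rcases h01 q ω with h | h <;> rw [h] <;> simp [hc0 q]
      have hupper : Real.sqrt (∑ q, Bv q ω * c q) ≤ qG + s := by
        have h1 : ∑ q, Bv q ω * c q ≤ (qG + s)^2 := by
          rw [hA]
          nlinarith [hSU, hqGsq]
        calc Real.sqrt (∑ q, Bv q ω * c q) ≤ Real.sqrt ((qG+s)^2) := Real.sqrt_le_sqrt h1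
          _ = qG + s := Real.sqrt_sq (by positivity)
      have hlower : qG - s ≤ Real.sqrt (∑ q, Bv q ω * c q) := by
        by_cases hsq : s ≤ qG
        · have hnot : ¬ (s*qG ≤ ∑ q, (Bv q ω - p) * (-(c q))) := by
            intro h
            exact hnotL (by rw [hbadL, if_pos hsq]; exact h)
          have hneg : ∑ q, (Bv q ω - p) * (-(c q)) = -(Smap ω) := by
            rw [hSmap, ← Finset.sum_neg_distrib]
            apply Finset.sum_congr rfl
            intro q _
            ring
          rw [hneg] at hnot
          have hSL : -(s*qG) < Smap ω := by linarith [not_le.mp hnot]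
          have h1 : (qG - s)^2 ≤ ∑ q, Bv q ω * c q := by
            rw [hA]
            nlinarith [hSL, hqGsq, mul_nonneg hs.le hqGpos.le]
          calc qG - s = Real.sqrt ((qG-s)^2) := (Real.sqrt_sq (by linarith)).symm
            _ ≤ Real.sqrt (∑ q, Bv q ω * c q) := Real.sqrt_le_sqrt h1
        · push_neg at hsq
          linarith [Real.sqrt_nonneg (∑ q, Bv q ω * c q)]
      rw [abs_le]
      constructor <;> linarith [hupper, hlower]

set_option maxHeartbeats 2000000 in
/-- Maximum of empirical-norm deviations over the net: there is a universal constant C* ≥ 2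
such that for δ = T/8 and d > 16, with probability at least 1 − 4exp(−pδ²/(8a²)),
max_j |‖𝒳(M0−G^j)‖₂ − ‖M0−G^j‖_{L2(Π)}| ≤ √p·δ + 8C*a√(kd). -/
theorem net_max_deviation_bound :
    ∃ Cstar : ℝ, 2 ≤ Cstar ∧
      ∀ (m1 m2 n k : ℕ) (a p T δ : ℝ)
        (Ω : Type) [MeasurableSpace Ω] (P : Measure Ω), IsProbabilityMeasure P →
        ∀ (B : Ω → Matrix (Fin m1) (Fin m2) ℝ) (M0 : Matrix (Fin m1) (Fin m2) ℝ)
          (net : Finset (Matrix (Fin m1) (Fin m2) ℝ)),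
        0 < m1 → 0 < m2 → 0 < n → n ≤ m1 * m2 → p = (n : ℝ) / (m1 * m2) →
        0 < a → 0 < T → δ = T / 8 → 1 ≤ k → 16 < m1 + m2 →
        IsBernoulliMatrix P B p →
        (net.card : ℝ) ≤ (18 * T / δ) ^ (2 * (m1 + m2 + 1) * k) →
        (∀ G ∈ net, (∀ i j, |G i j - M0 i j| ≤ 2 * a) ∧ frob (G - M0) ≤ 2 * T) →
        1 - ENNReal.ofReal (4 * Real.exp (-(p * δ ^ 2) / (8 * a ^ 2))) ≤
          P {ω | ∀ G ∈ net,
            |frob (hadB (B ω) (M0 - G)) - Real.sqrt p * frob (M0 - G)| ≤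
              Real.sqrt p * δ + 8 * Cstar * a * Real.sqrt (k * (m1 + m2))} := by
  classical
  refine ⟨2, le_refl 2, ?_⟩
  intro m1 m2 n k a p T δ Ω _ P hP B M0 net hm1 hm2 hn hnle hpdef ha hT hδdef hk hd hBern
    hcard hnet
  obtain ⟨hBmeas, hB01, hBp, hBindep⟩ := hBern
  have hMpos : (0:ℝ) < (m1:ℝ) * (m2:ℝ) := by
    have h1 : (0:ℝ) < (m1:ℝ) := by exact_mod_cast hm1
    have h2 : (0:ℝ) < (m2:ℝ) := by exact_mod_cast hm2
    positivity
  have hp0 : 0 < p := by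
    rw [hpdef]
    apply div_pos (by exact_mod_cast hn) hMpos
  have hp1 : p ≤ 1 := by
    rw [hpdef]
    rw [div_le_one hMpos]
    exact_mod_cast hnle
  have hδ0 : 0 < δ := by rw [hδdef]; linarith
  set kd : ℝ := (k:ℝ) * ((m1:ℝ) + (m2:ℝ)) with hkddef
  have hD17 : (17:ℝ) ≤ (m1:ℝ) + (m2:ℝ) := by
    have : (17:ℕ) ≤ m1 + m2 := hd
    exact_mod_cast this
  have hk1 : (1:ℝ) ≤ (k:ℝ) := by exact_mod_cast hk
  have hkd17 : (17:ℝ) ≤ kd := by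
    rw [hkddef]
    nlinarith
  have hkd0 : (0:ℝ) ≤ kd := by linarith
  set s : ℝ := Real.sqrt p * δ + 8 * 2 * a * Real.sqrt ((k:ℝ) * ((m1:ℝ) + (m2:ℝ))) with hsdef
  have hsqrtp0 : 0 < Real.sqrt p := Real.sqrt_pos.mpr hp0
  have hsqrtkd : (1:ℝ) ≤ Real.sqrt kd := by
    rw [show (1:ℝ) = Real.sqrt 1 by rw [Real.sqrt_one]]
    exact Real.sqrt_le_sqrt (by linarith)
  have hs0 : 0 < s := by
    have h1 : 0 < Real.sqrt p * δ := mul_pos hsqrtp0 hδ0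
    have h2 : 0 ≤ 8*2*a*Real.sqrt ((k:ℝ)*((m1:ℝ)+(m2:ℝ))) := by positivity
    rw [hsdef]; linarith
  -- per-G bad events
  have key : ∀ G ∈ net, ∃ bad : Set Ω, MeasurableSet bad ∧
      P bad ≤ 2 * ENNReal.ofReal (Real.exp (-(s^2/(8*a^2)))) ∧
      ∀ ω, ω ∉ bad →
        |frob (hadB (B ω) (M0 - G)) - Real.sqrt p * frob (M0 - G)| ≤ s := by
    intro G hG
    set c : Fin m1 × Fin m2 → ℝ := fun q => ((M0 - G) q.1 q.2)^2 with hcdef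
    have hc0 : ∀ q, 0 ≤ c q := fun q => sq_nonneg _
    have hc4 : ∀ q, c q ≤ 4*a^2 := by
      intro q
      have habs : |(M0 - G) q.1 q.2| ≤ 2*a := by
        have h1 := (hnet G hG).1 q.1 q.2
        have h2 : (M0 - G) q.1 q.2 = -(G q.1 q.2 - M0 q.1 q.2) := by
          rw [Matrix.sub_apply]; ring
        rw [h2, abs_neg]
        exact h1
      have h3 := abs_le.mp habs
      show ((M0 - G) q.1 q.2)^2 ≤ 4*a^2
      nlinarith [h3.1, h3.2]
    obtain ⟨bad, hmeas, hPle, hdet⟩ := aux_perG P (fun q ω => B ω q.1 q.2) hBindep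
      (fun q => hBmeas q.1 q.2) (fun q ω => hB01 ω q.1 q.2) p hp0 hp1
      (fun q => hBp q.1 q.2) c a ha hc0 hc4 s hs0
    refine ⟨bad, hmeas, hPle, ?_⟩
    intro ω hω
    have h1 := hdet ω hω
    have hsum1 : ∑ q : Fin m1 × Fin m2, B ω q.1 q.2 * c q = frob2 (hadB (B ω) (M0 - G)) := by
      rw [frob2, Fintype.sum_prod_type]
      apply Finset.sum_congr rfl
      intro i _
      apply Finset.sum_congr rfl
      intro j _
      rcases hB01 ω i j with h | h <;> simp [hadB, hcdef, h] <;> ring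
    have hsum2 : ∑ q : Fin m1 × Fin m2, c q = frob2 (M0 - G) := by
      rw [frob2, Fintype.sum_prod_type]
    rw [hsum1, hsum2] at h1
    have hfrob2nn : 0 ≤ frob2 (M0 - G) := by
      rw [frob2]
      apply Finset.sum_nonneg
      intro i _
      exact Finset.sum_nonneg fun j _ => sq_nonneg _
    have hsplit : Real.sqrt (p * frob2 (M0 - G)) = Real.sqrt p * frob (M0 - G) := by
      rw [Real.sqrt_mul hp0.le, frob]
    rw [hsplit] at h1
    rw [frob]
    exact h1
  choose badf hbadmeas hbadP hbadgood using key
  set bad : Set Ω := ⋃ (G : {G // G ∈ net}), badf G.1 G.2 with hbaddef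
  have hbadmeas' : MeasurableSet bad :=
    MeasurableSet.iUnion fun G => hbadmeas G.1 G.2
  -- probability of bad
  have hPbad : P bad ≤ ENNReal.ofReal (4 * Real.exp (-(p * δ ^ 2) / (8 * a ^ 2))) := by
    have h1 : P bad ≤ ∑' (G : {G // G ∈ net}), P (badf G.1 G.2) := measure_iUnion_le _
    have h2 : ∑' (G : {G // G ∈ net}), P (badf G.1 G.2)
        = ∑ G : {G // G ∈ net}, P (badf G.1 G.2) := tsum_fintype _
    have h3 : ∑ G : {G // G ∈ net}, P (badf G.1 G.2)
        ≤ ∑ _G : {G // G ∈ net}, 2 * ENNReal.ofReal (Real.exp (-(s^2/(8*a^2)))) :=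
      Finset.sum_le_sum fun G _ => hbadP G.1 G.2
    have h4 : ∑ _G : {G // G ∈ net}, 2 * ENNReal.ofReal (Real.exp (-(s^2/(8*a^2))))
        = (net.card : ENNReal) * (2 * ENNReal.ofReal (Real.exp (-(s^2/(8*a^2))))) := by
      rw [Finset.sum_const, Finset.card_univ, Fintype.card_coe, nsmul_eq_mul]
    have h5 : (net.card : ENNReal) * (2 * ENNReal.ofReal (Real.exp (-(s^2/(8*a^2)))))
        ≤ ENNReal.ofReal (4 * Real.exp (-(p * δ ^ 2) / (8 * a ^ 2))) := by
      have hcast : (net.card : ENNReal) = ENNReal.ofReal (net.card : ℝ) := by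
        rw [ENNReal.ofReal_natCast]
      rw [hcast, ← ENNReal.ofReal_ofNat, ← ENNReal.ofReal_mul (by norm_num),
        ← ENNReal.ofReal_mul (by positivity)]
      apply ENNReal.ofReal_le_ofReal
      -- the real inequality
      have hE : ((2 * (m1 + m2 + 1) * k : ℕ) : ℝ) = 2*((m1:ℝ)+(m2:ℝ)+1)*(k:ℝ) := by
        push_cast; ring
      have hTd : 18 * T / δ = 144 := by
        rw [hδdef]; field_simp; ring
      rw [hTd] at hcard
      have h144 : (144:ℝ) ≤ Real.exp 5 := by
        have he := Real.exp_one_gt_d9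
        have h5e : Real.exp 5 = (Real.exp 1)^5 := by
          rw [← Real.exp_nat_mul]; norm_num
        rw [h5e]
        calc (144:ℝ) ≤ 2.7182818283^5 := by norm_num
          _ ≤ (Real.exp 1)^5 := pow_le_pow_left₀ (by norm_num) he.le 5
      have hcard2 : (net.card : ℝ) ≤ Real.exp (5 * (2*((m1:ℝ)+(m2:ℝ)+1)*(k:ℝ))) := by
        refine hcard.trans ?_
        calc (144:ℝ) ^ (2 * (m1 + m2 + 1) * k)
            ≤ (Real.exp 5) ^ (2 * (m1 + m2 + 1) * k) :=
              pow_le_pow_left₀ (by norm_num) h144 _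
          _ = Real.exp (5 * (2*((m1:ℝ)+(m2:ℝ)+1)*(k:ℝ))) := by
              rw [← Real.exp_nat_mul]
              congr 1
              push_cast; ring
      have hs2 : p * δ^2 + 256*a^2*kd ≤ s^2 := by
        rw [hsdef]
        have e1 : (Real.sqrt p * δ)^2 = p * δ^2 := by
          rw [mul_pow, Real.sq_sqrt hp0.le]
        have e2 : (8 * 2 * a * Real.sqrt kd)^2 = 256*a^2*kd := by
          rw [mul_pow, Real.sq_sqrt hkd0]; ring
        have e3 : 0 ≤ (Real.sqrt p * δ) * (8 * 2 * a * Real.sqrt kd) := by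
          have := Real.sqrt_nonneg p
          have := Real.sqrt_nonneg kd
          positivity
        rw [← hkddef]
        nlinarith [e1, e2, e3]
      have hexp1 : Real.exp (-(s^2/(8*a^2)))
          ≤ Real.exp (-(p * δ ^ 2) / (8 * a ^ 2)) * Real.exp (-(32*kd)) := by
        rw [← Real.exp_add, Real.exp_le_exp]
        have ha2 : (0:ℝ) < 8*a^2 := by positivity
        have e : -(p*δ^2)/(8*a^2) + -(32*kd) = -((p*δ^2 + 256*a^2*kd)/(8*a^2)) := by
          field_simp; ring
        rw [e]
        apply neg_le_neg
        exact (div_le_div_iff_of_pos_right ha2).mpr hs2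
      have hexple : 5*(2*((m1:ℝ)+(m2:ℝ)+1)*(k:ℝ)) + -(32*kd) ≤ 0 := by
        rw [hkddef]
        nlinarith [hk1, hD17]
      calc (net.card : ℝ) * (2 * Real.exp (-(s^2/(8*a^2))))
          ≤ Real.exp (5*(2*((m1:ℝ)+(m2:ℝ)+1)*(k:ℝ))) *
            (2 * (Real.exp (-(p * δ ^ 2) / (8 * a ^ 2)) * Real.exp (-(32*kd)))) := by
            apply mul_le_mul hcard2 (mul_le_mul_of_nonneg_left hexp1 (by norm_num))
              (by positivity) (Real.exp_nonneg _)
        _ = 2 * Real.exp (5*(2*((m1:ℝ)+(m2:ℝ)+1)*(k:ℝ)) + -(32*kd)) *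
            Real.exp (-(p * δ ^ 2) / (8 * a ^ 2)) := by
            rw [Real.exp_add]; ring
        _ ≤ 2 * 1 * Real.exp (-(p * δ ^ 2) / (8 * a ^ 2)) := by
            apply mul_le_mul_of_nonneg_right ?_ (Real.exp_nonneg _)
            apply mul_le_mul_of_nonneg_left ?_ (by norm_num)
            exact Real.exp_le_one_iff.mpr hexple
        _ ≤ 4 * Real.exp (-(p * δ ^ 2) / (8 * a ^ 2)) := by
            nlinarith [Real.exp_nonneg (-(p * δ ^ 2) / (8 * a ^ 2))]
    calc P bad ≤ _ := h1
      _ = _ := h2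
      _ ≤ _ := h3
      _ = _ := h4
      _ ≤ _ := h5
  -- conclusion
  have hsub : badᶜ ⊆ {ω | ∀ G ∈ net,
      |frob (hadB (B ω) (M0 - G)) - Real.sqrt p * frob (M0 - G)| ≤
        Real.sqrt p * δ + 8 * 2 * a * Real.sqrt ((k:ℝ) * ((m1:ℝ) + (m2:ℝ)))} := by
    intro ω hω G hG
    have hnot : ω ∉ badf G hG := by
      intro hmem
      exact hω (Set.mem_iUnion.mpr ⟨⟨G, hG⟩, hmem⟩)
    exact hbadgood G hG ω hnot
  calc 1 - ENNReal.ofReal (4 * Real.exp (-(p * δ ^ 2) / (8 * a ^ 2)))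
      ≤ 1 - P bad := tsub_le_tsub_left hPbad 1
    _ = P badᶜ := (prob_compl_eq_one_sub hbadmeas').symm
    _ ≤ _ := measure_mono hsub
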